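/- Let (X_n)_{n∈ω} be an increasing sequence of subgroups of a group G, and for each n let U_n, V_n ⊆ X_n be sets that are invariant in X_n (xV_nx⁻¹ = V_n and xU_nx⁻¹ = U_n for all x ∈ X_n) and satisfy V_nV_n ⊆ U_n. Then for every m ∈ ω, (V_0V_1⋯V_m)·(V_0V_1⋯V_m) ⊆ U_0U_1⋯U_m. -/
import Mathlib


open Set Pointwise

universe u

/-- The directed partial products `U 0 * U 1 * ⋯ * U m` of a sequence of subsets of a
group. -/
def dirProd {G : Type u} [Group G] (U : ℕ → Set G) : ℕ → Set G
  | 0 => U 0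
  | m + 1 => dirProd U m * U (m + 1)

lemma comm_aux {G : Type u} [Group G] (H : Subgroup G) (W A : Set G) (hA : A ⊆ (H : Set G))
    (hW : ∀ x ∈ H, (fun g => x * g * x⁻¹) '' W = W) : A * W = W * A := by
  ext z
  simp only [Set.mem_mul]
  constructor
  · rintro ⟨a, ha, w, hw, rfl⟩
    refine ⟨a * w * a⁻¹, ?_, a, ha, by group⟩
    rw [← hW a (hA ha)]; exact ⟨w, hw, rfl⟩
  · rintro ⟨w, hw, a, ha, rfl⟩
    refine ⟨a, ha, a⁻¹ * w * a, ?_, by group⟩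
    rw [← hW a⁻¹ (H.inv_mem (hA ha))]; exact ⟨w, hw, by group⟩

lemma dirProd_sub {G : Type u} [Group G] (S : ℕ → Subgroup G) (mono : Monotone S)
    (V : ℕ → Set G) (hVsub : ∀ n, V n ⊆ (S n : Set G)) :
    ∀ m, dirProd V m ⊆ (S m : Set G) := by
  intro m
  induction m with
  | zero => exact hVsub 0
  | succ m ih =>
    rintro z ⟨a, ha, w, hw, rfl⟩
    exact mul_mem (mono (Nat.le_succ m) (ih ha)) (hVsub (m + 1) hw)

/-- Let `(X_n)` be an increasing sequence of subgroups of a group `G`, and for each `n` let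
`U_n, V_n ⊆ X_n` be sets invariant in `X_n` with `V_n V_n ⊆ U_n`.  Then for every `m`,
`(V_0 V_1 ⋯ V_m) (V_0 V_1 ⋯ V_m) ⊆ U_0 U_1 ⋯ U_m`. -/
theorem statement18 {G : Type u} [Group G] (S : ℕ → Subgroup G) (mono : Monotone S)
    (U V : ℕ → Set G)
    (hUsub : ∀ n, U n ⊆ (S n : Set G)) (hVsub : ∀ n, V n ⊆ (S n : Set G))
    (hUinvar : ∀ n, ∀ x ∈ S n, (fun g => x * g * x⁻¹) '' U n = U n)
    (hVinvar : ∀ n, ∀ x ∈ S n, (fun g => x * g * x⁻¹) '' V n = V n)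
    (hVV : ∀ n, V n * V n ⊆ U n) :
    ∀ m, dirProd V m * dirProd V m ⊆ dirProd U m := by
  intro m
  induction m with
  | zero => exact hVV 0
  | succ m ih =>
    have hP : dirProd V m ⊆ (S (m + 1) : Set G) :=
      (dirProd_sub S mono V hVsub m).trans (mono (Nat.le_succ m))
    have hcomm : dirProd V m * V (m + 1) = V (m + 1) * dirProd V m :=
      comm_aux (S (m + 1)) (V (m + 1)) (dirProd V m) hP (hVinvar (m + 1))
    show dirProd V m * V (m + 1) * (dirProd V m * V (m + 1)) ⊆ dirProd U m * U (m + 1)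
    calc dirProd V m * V (m + 1) * (dirProd V m * V (m + 1))
        = dirProd V m * (V (m + 1) * dirProd V m) * V (m + 1) := by
          simp only [mul_assoc]
      _ = dirProd V m * (dirProd V m * V (m + 1)) * V (m + 1) := by rw [hcomm]
      _ = dirProd V m * dirProd V m * (V (m + 1) * V (m + 1)) := by
          simp only [mul_assoc]
      _ ⊆ dirProd U m * U (m + 1) := Set.mul_subset_mul ih (hVV (m + 1))
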